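/- Let E be a real inner product space, F a dense linear subspace of E, x ∈ E with x ≠ 0, and y ∈ F. Then there exists a continuous linear operator K : E → E such that (i) K is symmetric with respect to the inner product, i.e. ⟨K u, v⟩ = ⟨u, K v⟩ for all u, v ∈ E; (ii) the range of K is a finite-dimensional subspace of E contained in F; and (iii) K x = y. -/

import Mathlib

open scoped RealInnerProductSpace

/-- Proposition 2.2: on a real inner product space `E`, given a dense subspace `F`,
`x ≠ 0` and `y ∈ F`, there is a continuous symmetric finite-rank operator `K`
with range contained in `F` and `K x = y`. -/
theorem exists_symmetric_finiteRank_operator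
    {E : Type*} [NormedAddCommGroup E] [InnerProductSpace ℝ E]
    (F : Submodule ℝ E) (hF : Dense (F : Set E))
    (x : E) (hx : x ≠ 0) (y : E) (hy : y ∈ F) :
    ∃ K : E →L[ℝ] E,
      (∀ u v : E, ⟪K u, v⟫ = ⟪u, K v⟫) ∧
      FiniteDimensional ℝ (LinearMap.range (K : E →ₗ[ℝ] E)) ∧
      LinearMap.range (K : E →ₗ[ℝ] E) ≤ F ∧
      K x = y := by
  -- find z ∈ F with ⟪z, x⟫ ≠ 0
  obtain ⟨z, hzF, hzx⟩ : ∃ z, z ∈ F ∧ ⟪z, x⟫ ≠ 0 := by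
    by_contra h
    push_neg at h
    have hclosed : IsClosed {w : E | ⟪w, x⟫ = 0} :=
      isClosed_eq (by continuity) continuous_const
    have hsub : (F : Set E) ⊆ {w : E | ⟪w, x⟫ = 0} := fun w hw => h w hw
    have : x ∈ {w : E | ⟪w, x⟫ = 0} := by
      have := hclosed.closure_subset_iff.mpr hsub
      exact this (hF x)
    exact hx (inner_self_eq_zero.mp this)
  set c : ℝ := ⟪z, x⟫ with hc
  set a : ℝ := 1 / c
  set b : ℝ := -⟪x, y⟫ / c ^ 2
  -- K u = a ⟪z,u⟫ y + a ⟪y,u⟫ z + b ⟪z,u⟫ z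
  set K : E →L[ℝ] E :=
    ((a • (innerSL ℝ z)).smulRight y) + ((a • (innerSL ℝ y)).smulRight z)
      + ((b • (innerSL ℝ z)).smulRight z) with hK
  have hKapp : ∀ u : E, K u = (a * ⟪z, u⟫) • y + (a * ⟪y, u⟫) • z + (b * ⟪z, u⟫) • z := by
    intro u
    simp [hK, smul_smul]
  refine ⟨K, ?_, ?_, ?_, ?_⟩
  · intro u v
    simp only [hKapp]
    simp only [inner_add_left, inner_add_right, inner_smul_left, inner_smul_right,
      RCLike.conj_to_real]
    rw [real_inner_comm u z, real_inner_comm u y]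
    ring
  · have hle : LinearMap.range (K : E →ₗ[ℝ] E) ≤ Submodule.span ℝ {y, z} := by
      rintro _ ⟨u, rfl⟩
      have hy' : y ∈ Submodule.span ℝ ({y, z} : Set E) :=
        Submodule.subset_span (by simp)
      have hz' : z ∈ Submodule.span ℝ ({y, z} : Set E) :=
        Submodule.subset_span (by simp)
      show K u ∈ _
      rw [hKapp]
      exact Submodule.add_mem _ (Submodule.add_mem _ (Submodule.smul_mem _ _ hy')
        (Submodule.smul_mem _ _ hz')) (Submodule.smul_mem _ _ hz')
    have : FiniteDimensional ℝ (Submodule.span ℝ ({y, z} : Set E)) :=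
      FiniteDimensional.span_of_finite ℝ (Set.toFinite _)
    exact Submodule.finiteDimensional_of_le hle
  · rintro _ ⟨u, rfl⟩
    show K u ∈ F
    rw [hKapp]
    exact Submodule.add_mem _ (Submodule.add_mem _ (Submodule.smul_mem _ _ hy)
      (Submodule.smul_mem _ _ hzF)) (Submodule.smul_mem _ _ hzF)
  · rw [hKapp]
    have hc0 : c ≠ 0 := hzx
    have ha : a * ⟪z, x⟫ = 1 := by
      exact one_div_mul_cancel hc0
    have hb : a * ⟪y, x⟫ + b * ⟪z, x⟫ = 0 := by
      simp only [a, b, ← hc, real_inner_comm y x]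
      field_simp
      ring
    rw [ha, one_smul]
    have : (a * ⟪y, x⟫) • z + (b * ⟪z, x⟫) • z = ((a * ⟪y, x⟫ + b * ⟪z, x⟫)) • z := by
      rw [add_smul]
    rw [add_assoc, this, hb, zero_smul, add_zero]
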